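/- The quasi-stationary profile solves the first-order equation: with κ(y) = σ² + δ²/2 - y²/2 for |y| < δ and κ(y) = σ² for |y| ≥ δ, and f_q as the piecewise Gaussian/uniform profile centered at c, the function g(y) = κ(y) f_q(c + y) satisfies d/dy (κ(y) f_q(c+y)) + y f_q(c+y) = 0 for all y with |y| ≠ δ. -/

import Mathlib

theorem quasi_stationary_profile_solves_first_order_eq
    (σ δ m₁ m₂ c : ℝ) (hσ : 0 < σ) (hδ : 0 < δ) (hm₁ : 0 < m₁) (hm₂ : 0 < m₂)
    (κ : ℝ → ℝ)
    (hκ : ∀ y, κ y = if |y| < δ then σ^2 + δ^2/2 - y^2/2 else σ^2)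
    (fq : ℝ → ℝ)
    (hfq : ∀ y, fq (c + y) =
      if |y| < δ then m₂ / (2 * δ)
      else (m₁ / Real.sqrt (2 * Real.pi * σ^2)) *
        Real.exp (-y^2 / (2 * σ^2))) :
    ∀ y : ℝ, |y| ≠ δ →
      HasDerivAt (fun z => κ z * fq (c + z)) (-(y * fq (c + y))) y := by
  intro y hy
  rcases lt_or_gt_of_ne hy with h | h
  · -- |y| < δ : locally constant fq, quadratic κ
    have hfy : fq (c + y) = m₂ / (2 * δ) := by rw [hfq]; simp [h]
    have hopen : {z : ℝ | |z| < δ} ∈ nhds y :=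
      (isOpen_lt (by continuity) continuous_const).mem_nhds h
    have hder : HasDerivAt (fun z : ℝ => (σ^2 + δ^2/2 - z^2/2) * (m₂ / (2 * δ)))
        (-(y * (m₂ / (2 * δ)))) y := by
      have h1 : HasDerivAt (fun z : ℝ => σ^2 + δ^2/2 - z^2/2) (-y) y := by
        have := ((hasDerivAt_pow 2 y).div_const 2).const_sub (σ^2 + δ^2/2)
        refine this.congr_deriv ?_
        ring
      have := h1.mul_const (m₂ / (2 * δ))
      refine this.congr_deriv ?_
      ring
    refine (hder.congr_of_eventuallyEq ?_).congr_deriv (by rw [hfy])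
    filter_upwards [hopen] with z hz
    rw [hκ, hfq]
    simp [hz]
  · -- |y| > δ : Gaussian part
    have hny : ¬ |y| < δ := not_lt.mpr h.le
    have hfy : fq (c + y) = (m₁ / Real.sqrt (2 * Real.pi * σ^2)) *
        Real.exp (-y^2 / (2 * σ^2)) := by rw [hfq]; simp [hny]
    have hopen : {z : ℝ | δ < |z|} ∈ nhds y :=
      (isOpen_lt continuous_const (by continuity)).mem_nhds h
    set A := m₁ / Real.sqrt (2 * Real.pi * σ^2) with hA
    have hσ2 : (σ:ℝ)^2 ≠ 0 := pow_ne_zero 2 hσ.ne'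
    have hinner : HasDerivAt (fun z : ℝ => -z^2 / (2 * σ^2)) (-y / σ^2) y := by
      have := ((hasDerivAt_pow 2 y).neg.div_const (2 * σ^2))
      refine this.congr_deriv ?_
      field_simp
      ring
    have hexp : HasDerivAt (fun z : ℝ => Real.exp (-z^2 / (2 * σ^2)))
        (Real.exp (-y^2 / (2 * σ^2)) * (-y / σ^2)) y := hinner.exp
    have hder : HasDerivAt (fun z : ℝ => σ^2 * (A * Real.exp (-z^2 / (2 * σ^2))))
        (-(y * (A * Real.exp (-y^2 / (2 * σ^2))))) y := by
      have := ((hexp.const_mul A).const_mul (σ^2))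
      refine this.congr_deriv ?_
      field_simp
    refine (hder.congr_of_eventuallyEq ?_).congr_deriv (by rw [hfy])
    filter_upwards [hopen] with z hz
    have hz' : δ < |z| := hz
    have hnz : ¬ |z| < δ := not_lt.mpr hz'.le
    rw [hκ, hfq]
    simp [hnz]
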